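/- Conservativity of termination: if P' ⊇ P and no name defined by P'∖P occurs in P or in the term M, then M terminates under P iff M terminates under P'. -/

import Mathlib

/-- Terms of continuation calculus: names (coded as naturals) and dot. -/
inductive Tm where
  | name : ℕ → Tm
  | dot : Tm → Tm → Tm
deriving DecidableEq

/-- Right-hand sides of rules: names, variables (de Bruijn-style indices
into the left-hand side's variable list), and dot. -/
inductive Rhs where
  | name : ℕ → Rhs
  | var : ℕ → Rhs
  | dot : Rhs → Rhs → Rhs
deriving DecidableEq

/-- A rule `n.x₁.⋯.xₖ → r`: head name, arity `k`, and right-hand side. -/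
structure Rule where
  head : ℕ
  arity : ℕ
  rhs : Rhs
deriving DecidableEq

/-- A program is a finite set of rules. -/
abbrev Program := Finset Rule

/-- Variables occurring in a right-hand side. -/
def Rhs.HasVar : Rhs → ℕ → Prop
  | .name _, _ => False
  | .var w, v => w = v
  | .dot a b, v => a.HasVar v ∨ b.HasVar v

/-- Well-formedness: every variable of a right-hand side occurs in the
left-hand side, and there is at most one rule per head name. -/
def Program.Wf (P : Program) : Prop :=
  (∀ r ∈ P, ∀ v, r.rhs.HasVar v → v < r.arity) ∧
  (∀ r₁ ∈ P, ∀ r₂ ∈ P, r₁.head = r₂.head → r₁ = r₂)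

/-- `n.t₁.⋯.tₖ` : left-associated application of a term to a list of terms. -/
def Tm.apps : Tm → List Tm → Tm
  | h, [] => h
  | h, t :: ts => Tm.apps (h.dot t) ts

/-- Instantiation of a right-hand side with the terms matched by the
left-hand side variables; fails if some variable is out of range. -/
def Rhs.inst (ts : List Tm) : Rhs → Option Tm
  | .name n => some (.name n)
  | .var v => ts[v]?
  | .dot a b => do pure (.dot (← a.inst ts) (← b.inst ts))

/-- One-step evaluation `M →_P N`. -/
def Step (P : Program) (M N : Tm) : Prop :=
  ∃ r ∈ P, ∃ ts : List Tm, ts.length = r.arity ∧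
    M = Tm.apps (.name r.head) ts ∧ r.rhs.inst ts = some N

/-- Multi-step evaluation `M →*_P N`. -/
def Steps (P : Program) : Tm → Tm → Prop := Relation.ReflTransGen (Step P)

/-- `M` is final: it has no successor. -/
def Final (P : Program) (M : Tm) : Prop := ¬ ∃ N, Step P M N

/-- `M` terminates: it evaluates to a final term. -/
def Terminates (P : Program) (M : Tm) : Prop := ∃ N, Steps P M N ∧ Final P N

/-- The name `m` occurs in a term. -/
def Tm.HasName (m : ℕ) : Tm → Prop
  | .name n => n = m
  | .dot a b => a.HasName m ∨ b.HasName m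

/-- The name `m` occurs in a right-hand side. -/
def Rhs.HasName (m : ℕ) : Rhs → Prop
  | .name n => n = m
  | .var _ => False
  | .dot a b => a.HasName m ∨ b.HasName m

/-- The name `m` occurs (is mentioned) in a program. -/
def Program.HasName (P : Program) (m : ℕ) : Prop :=
  ∃ r ∈ P, r.head = m ∨ r.rhs.HasName m

/-- The name `m` is defined by the program (is the head of some rule). -/
def Program.Defines (P : Program) (m : ℕ) : Prop :=
  ∃ r ∈ P, r.head = m

/-- Substitution of a term for a name, `M[fr := t]`. -/
def Tm.subName (m : ℕ) (t : Tm) : Tm → Tm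
  | .name n => if n = m then t else .name n
  | .dot a b => .dot (Tm.subName m t a) (Tm.subName m t b)

/-- Common reduct relation `M =_P N`. -/
def CommonRed (P : Program) (M N : Tm) : Prop :=
  ∃ t, Steps P M t ∧ Steps P N t

/-- Observational equivalence `M ≈_P N`. -/
def ObsEq (P : Program) (M N : Tm) : Prop :=
  ∀ P' : Program, P'.Wf → P ⊆ P' →
    ∀ X : Tm, (Terminates P' (X.dot M) ↔ Terminates P' (X.dot N))

/-- Renaming of names in a term. -/
def Tm.rename (f : ℕ → ℕ) : Tm → Tm
  | .name n => .name (f n)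
  | .dot a b => .dot (a.rename f) (b.rename f)

/-- Renaming of names in a right-hand side. -/
def Rhs.rename (f : ℕ → ℕ) : Rhs → Rhs
  | .name n => .name (f n)
  | .var v => .var v
  | .dot a b => .dot (a.rename f) (b.rename f)

/-- Renaming of names in a rule. -/
def Rule.rename (f : ℕ → ℕ) (r : Rule) : Rule :=
  ⟨f r.head, r.arity, r.rhs.rename f⟩

/-- Renaming of names in a program. -/
def Program.rename (f : ℕ → ℕ) (P : Program) : Program :=
  P.image (Rule.rename f)

/-- The fresh substitution `[n⃗ := m⃗]` as a function on names. -/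
def renFun (ns ms : List ℕ) (n : ℕ) : ℕ :=
  ((ns.zip ms).lookup n).getD n

/-- `M` has arity `k` under `P`: `M = n.q₁.⋯.qᵢ` where `n` has a rule of
arity `i + k`. -/
def Tm.ArityIs (P : Program) (M : Tm) (k : ℕ) : Prop :=
  ∃ r ∈ P, ∃ ts : List Tm, M = Tm.apps (.name r.head) ts ∧ ts.length + k = r.arity

lemma apps_hasName (m : ℕ) : ∀ (ts : List Tm) (h : Tm),
    (Tm.apps h ts).HasName m ↔ h.HasName m ∨ ∃ t ∈ ts, t.HasName m := by
  intro ts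
  induction ts with
  | nil => intro h; simp [Tm.apps]
  | cons a l ih =>
      intro h
      simp [Tm.apps, ih, Tm.HasName]
      tauto

lemma inst_hasName (m : ℕ) : ∀ (r : Rhs) (ts : List Tm) (N : Tm),
    r.inst ts = some N → N.HasName m → r.HasName m ∨ ∃ t ∈ ts, t.HasName m := by
  intro r
  induction r with
  | name n =>
      intro ts N hi hN
      simp [Rhs.inst] at hi
      subst hi
      exact Or.inl hN
  | var v =>
      intro ts N hi hN
      simp [Rhs.inst] at hi
      exact Or.inr ⟨N, List.mem_iff_getElem?.mpr ⟨v, hi⟩, hN⟩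
  | dot a b iha ihb =>
      intro ts N hi hN
      simp [Rhs.inst, Option.bind_eq_some_iff] at hi
      obtain ⟨A, hA, B, hB, rfl⟩ := hi
      rcases hN with hN | hN
      · rcases iha ts A hA hN with h | h
        · exact Or.inl (Or.inl h)
        · exact Or.inr h
      · rcases ihb ts B hB hN with h | h
        · exact Or.inl (Or.inr h)
        · exact Or.inr h

theorem terminates_conservative_extension (P P' : Program) (hP : P.Wf) (hP' : P'.Wf)
    (hsub : P ⊆ P') (M : Tm)
    (hfresh : ∀ r ∈ P', r ∉ P → ¬ Tm.HasName r.head M ∧ ¬ P.HasName r.head) :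
    Terminates P M ↔ Terminates P' M := by
  -- Good X : no fresh head occurs in X
  set Good : Tm → Prop := fun X => ∀ r ∈ P', r ∉ P → ¬ Tm.HasName r.head X with hGood
  have hGM : Good M := fun r hr hn => (hfresh r hr hn).1
  -- backward step transfer
  have stepBack : ∀ X N, Good X → Step P' X N → Step P X N := by
    intro X N hX hs
    obtain ⟨r, hr, ts, hlen, hXeq, hinst⟩ := hs
    by_cases hmem : r ∈ P
    · exact ⟨r, hmem, ts, hlen, hXeq, hinst⟩
    · exfalso
      apply hX r hr hmem
      rw [hXeq, apps_hasName]
      exact Or.inl rfl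
  -- Good is preserved by P-steps
  have goodPres : ∀ X N, Good X → Step P X N → Good N := by
    intro X N hX hs r' hr' hn' hN
    obtain ⟨r, hr, ts, hlen, hXeq, hinst⟩ := hs
    rcases inst_hasName r'.head r.rhs ts N hinst hN with h | ⟨t, ht, hname⟩
    · exact (hfresh r' hr' hn').2 ⟨r, hr, Or.inr h⟩
    · apply hX r' hr' hn'
      rw [hXeq, apps_hasName]
      exact Or.inr ⟨t, ht, hname⟩
  -- Good preserved by P'-steps (via stepBack)
  have goodPres' : ∀ X N, Good X → Step P' X N → Good N := fun X N hX hs =>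
    goodPres X N hX (stepBack X N hX hs)
  -- Final transfer
  have finalIff : ∀ X, Good X → (Final P X ↔ Final P' X) := by
    intro X hX
    constructor
    · intro hf ⟨N, hs⟩
      exact hf ⟨N, stepBack X N hX hs⟩
    · intro hf ⟨N, hs⟩
      exact hf ⟨N, ⟨hs.choose, hsub hs.choose_spec.1, hs.choose_spec.2⟩⟩
  constructor
  · rintro ⟨N, hsteps, hfin⟩
    refine ⟨N, ?_, ?_⟩
    · exact Relation.ReflTransGen.mono (r := Step P) (p := Step P') (fun a b ⟨r, hr, h⟩ => (⟨r, hsub hr, h⟩ : Step P' a b)) _ _ hsteps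
    · have hGN : Good N := by
        clear hfin
        induction hsteps with
        | refl => exact hGM
        | tail _ hstep ih => exact goodPres _ _ ih hstep
      exact (finalIff N hGN).mp hfin
  · rintro ⟨N, hsteps, hfin⟩
    have key : ∀ X N, Steps P' X N → Good X → Steps P X N ∧ Good N := by
      intro X N hsteps
      induction hsteps with
      | refl => exact fun h => ⟨Relation.ReflTransGen.refl, h⟩
      | tail hst hstep ih =>
          intro hX
          obtain ⟨hs, hg⟩ := ih hX
          exact ⟨hs.tail (stepBack _ _ hg hstep), goodPres' _ _ hg hstep⟩
    obtain ⟨hs, hg⟩ := key M N hsteps hGM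
    exact ⟨N, hs, (finalIff N hg).mpr hfin⟩
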